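/- Every strongly rotund Banach space satisfies the property (HS). -/

import Mathlib

open Metric Filter Topology NormedSpace

noncomputable section

/-- The face `S(X, f, 0) = {y ∈ B_X : f(y) = 1}` determined by a functional `f`. -/
def face (X : Type*) [NormedAddCommGroup X] [NormedSpace ℝ X] (f : X →L[ℝ] ℝ) : Set X :=
  {y | ‖y‖ ≤ 1 ∧ f y = 1}

/-- Property (HS). -/
def HSProp (X : Type*) [NormedAddCommGroup X] [NormedSpace ℝ X] : Prop :=
  ∀ f : X →L[ℝ] ℝ, ‖f‖ = 1 → (face X f).Nonempty →
    ∀ xs : ℕ → X, (∀ n, ‖xs n‖ ≤ 1) →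
      Tendsto (fun n => f (xs n)) atTop (𝓝 1) →
      Tendsto (fun n => infDist (xs n) (face X f)) atTop (𝓝 0)

/-- Property (HLUR). -/
def HLUR (X : Type*) [NormedAddCommGroup X] [NormedSpace ℝ X] : Prop :=
  ∀ x : X, ‖x‖ = 1 → ∀ xs : ℕ → X, (∀ n, ‖xs n‖ = 1) →
    Tendsto (fun n => ‖xs n + x‖) atTop (𝓝 2) →
    ∀ f : X →L[ℝ] ℝ, ‖f‖ = 1 → f x = 1 →
      Tendsto (fun n => infDist (xs n) (face X f)) atTop (𝓝 0)

/-- Local uniform rotundity. -/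
def LUR (X : Type*) [NormedAddCommGroup X] [NormedSpace ℝ X] : Prop :=
  ∀ x : X, ‖x‖ = 1 → ∀ xs : ℕ → X, (∀ n, ‖xs n‖ = 1) →
    Tendsto (fun n => ‖xs n + x‖) atTop (𝓝 2) → Tendsto xs atTop (𝓝 x)

/-- Compact local uniform rotundity. -/
def CLUR (X : Type*) [NormedAddCommGroup X] [NormedSpace ℝ X] : Prop :=
  ∀ x : X, ‖x‖ = 1 → ∀ xs : ℕ → X, (∀ n, ‖xs n‖ = 1) →
    Tendsto (fun n => ‖xs n + x‖) atTop (𝓝 2) →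
    ∃ φ : ℕ → ℕ, StrictMono φ ∧ ∃ z : X, Tendsto (xs ∘ φ) atTop (𝓝 z)

/-- Local U-convexity. -/
def LocallyUConvex (X : Type*) [NormedAddCommGroup X] [NormedSpace ℝ X] : Prop :=
  ∀ x : X, ‖x‖ = 1 → ∀ xs : ℕ → X, (∀ n, ‖xs n‖ = 1) →
    Tendsto (fun n => ‖xs n + x‖) atTop (𝓝 2) →
    ∃ f : X →L[ℝ] ℝ, ‖f‖ = 1 ∧ f x = 1 ∧ Tendsto (fun n => f (xs n)) atTop (𝓝 1)

/-- Strong local U-convexity. -/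
def StronglyLocallyUConvex (X : Type*) [NormedAddCommGroup X] [NormedSpace ℝ X] : Prop :=
  ∀ x : X, ‖x‖ = 1 → ∀ xs : ℕ → X, (∀ n, ‖xs n‖ = 1) →
    Tendsto (fun n => ‖xs n + x‖) atTop (𝓝 2) →
    ∀ f : X →L[ℝ] ℝ, ‖f‖ = 1 → f x = 1 → Tendsto (fun n => f (xs n)) atTop (𝓝 1)

/-- Rotundity (strict convexity): every face has at most one element. -/
def Rotund (X : Type*) [NormedAddCommGroup X] [NormedSpace ℝ X] : Prop :=
  ∀ f : X →L[ℝ] ℝ, ‖f‖ = 1 → (face X f).Subsingleton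

/-- Near strict convexity: every face is norm-compact. -/
def NSC (X : Type*) [NormedAddCommGroup X] [NormedSpace ℝ X] : Prop :=
  ∀ f : X →L[ℝ] ℝ, ‖f‖ = 1 → IsCompact (face X f)

/-- Kadets-Klee property. -/
def KadetsKlee (X : Type*) [NormedAddCommGroup X] [NormedSpace ℝ X] : Prop :=
  ∀ (xs : ℕ → X) (x : X),
    (∀ f : X →L[ℝ] ℝ, Tendsto (fun n => f (xs n)) atTop (𝓝 (f x))) →
    Tendsto (fun n => ‖xs n‖) atTop (𝓝 ‖x‖) → Tendsto xs atTop (𝓝 x)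

/-- Alternatively convex or smooth. -/
def ACS (X : Type*) [NormedAddCommGroup X] [NormedSpace ℝ X] : Prop :=
  ∀ x y : X, ‖x‖ = 1 → ‖y‖ = 1 → ∀ f : X →L[ℝ] ℝ, ‖f‖ = 1 →
    ‖x + y‖ = 2 → f x = 1 → f y = 1

/-- Smoothness: each unit vector has a unique norming functional. -/
def SmoothSpace (X : Type*) [NormedAddCommGroup X] [NormedSpace ℝ X] : Prop :=
  ∀ x : X, ‖x‖ = 1 → ∃! f : X →L[ℝ] ℝ, ‖f‖ = 1 ∧ f x = 1

/-- Reflexivity of a normed space. -/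
def ReflexiveSpace (X : Type*) [NormedAddCommGroup X] [NormedSpace ℝ X] : Prop :=
  Function.Surjective (inclusionInDoubleDual ℝ X)

/-- Strong rotundity: reflexive, rotund and Kadets-Klee. -/
def StronglyRotund (X : Type*) [NormedAddCommGroup X] [NormedSpace ℝ X] : Prop :=
  ReflexiveSpace X ∧ Rotund X ∧ KadetsKlee X

theorem stronglyRotund_hs (X : Type*) [NormedAddCommGroup X] [NormedSpace ℝ X]
    [CompleteSpace X] (hX : StronglyRotund X) : HSProp X := by
  obtain ⟨hrefl, hrot, hkk⟩ := hX
  intro f hf hne xs hxs hft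
  obtain ⟨x, hxface⟩ := hne
  have hface : face X f = {x} :=
    Set.eq_singleton_iff_unique_mem.mpr ⟨hxface, fun y hy => hrot f hf hy hxface⟩
  have hfx : f x = 1 := hxface.2
  -- The embedding into the double dual with the weak-star topology
  set J : X → WeakDual ℝ (StrongDual ℝ X) :=
    fun z => StrongDual.toWeakDual (inclusionInDoubleDual ℝ X z) with hJ
  set K : Set (WeakDual ℝ (StrongDual ℝ X)) := WeakDual.toStrongDual ⁻¹' Metric.closedBall 0 1 with hKdef
  have hK : IsCompact K := WeakDual.isCompact_closedBall (𝕜 := ℝ) (0 : StrongDual ℝ (StrongDual ℝ X)) 1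
  have hmem : ∀ n, J (xs n) ∈ K := by
    intro n
    simp only [hKdef, Set.mem_preimage, Metric.mem_closedBall, dist_zero_right]
    have h := NormedSpace.double_dual_bound ℝ X (xs n)
    have h' : dist (WeakDual.toStrongDual (J (xs n))) 0 ≤ ‖xs n‖ := by
      exact (dist_zero_right ((inclusionInDoubleDual ℝ X) (xs n))).le.trans h
    exact le_trans h' (hxs n)
  have hweak : Tendsto (fun n => J (xs n)) atTop (𝓝 (J x)) := by
    refine Filter.le_iff_ultrafilter.mpr fun u hu => ?_
    have huK : (u : Filter (WeakDual ℝ (StrongDual ℝ X))) ≤ 𝓟 K :=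
      hu.trans (Filter.le_principal_iff.mpr (Filter.mem_map.mpr
        (Filter.Eventually.of_forall hmem)))
    obtain ⟨y, hyK, hy⟩ := hK.ultrafilter_le_nhds u huK
    have h1 : Tendsto (fun w : WeakDual ℝ (StrongDual ℝ X) => w f) (↑u) (𝓝 (y f)) :=
      ((WeakDual.eval_continuous f).tendsto y).comp hy
    have h2 : Tendsto (fun w : WeakDual ℝ (StrongDual ℝ X) => w f) (↑u) (𝓝 1) := by
      have : Filter.map (fun w : WeakDual ℝ (StrongDual ℝ X) => w f) ↑u ≤
          Filter.map (fun w : WeakDual ℝ (StrongDual ℝ X) => w f)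
            (Filter.map (fun n => J (xs n)) atTop) := Filter.map_mono hu
      refine this.trans ?_
      rw [Filter.map_map]
      exact hft
    have hyf : y f = 1 := tendsto_nhds_unique h1 h2
    obtain ⟨z, hz⟩ := hrefl (WeakDual.toStrongDual y)
    have hznorm : ‖z‖ ≤ 1 := by
      have h3 : ‖inclusionInDoubleDual ℝ X z‖ = ‖z‖ :=
        (NormedSpace.inclusionInDoubleDualLi ℝ (E := X)).norm_map z
      rw [hz] at h3
      rw [← h3]
      have h5 : dist (WeakDual.toStrongDual y) 0 ≤ 1 := hyK
      exact (dist_zero_right (WeakDual.toStrongDual y)).symm.le.trans h5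
    have hzf : f z = 1 := by
      have h4 := congrArg (fun w : StrongDual ℝ (StrongDual ℝ X) => w f) hz
      simpa using h4.trans hyf
    have hzx : z = x := by
      have : z ∈ face X f := ⟨hznorm, hzf⟩
      rw [hface] at this
      exact this
    have hyJx : y = J x := by
      rw [← hzx, hJ]
      exact congrArg StrongDual.toWeakDual hz.symm
    exact hyJx ▸ hy
  have hweakg : ∀ g : X →L[ℝ] ℝ, Tendsto (fun n => g (xs n)) atTop (𝓝 (g x)) := by
    intro g
    exact ((WeakDual.eval_continuous g).tendsto (J x)).comp hweak
  have hxnorm : ‖x‖ = 1 := by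
    refine le_antisymm hxface.1 ?_
    calc (1 : ℝ) = f x := hfx.symm
    _ ≤ ‖f x‖ := le_abs_self _
    _ ≤ ‖f‖ * ‖x‖ := f.le_opNorm x
    _ = ‖x‖ := by rw [hf, one_mul]
  have hnorm : Tendsto (fun n => ‖xs n‖) atTop (𝓝 ‖x‖) := by
    rw [hxnorm]
    refine tendsto_of_tendsto_of_tendsto_of_le_of_le hft tendsto_const_nhds
      (fun n => ?_) (fun n => hxs n)
    calc f (xs n) ≤ ‖f (xs n)‖ := le_abs_self _
    _ ≤ ‖f‖ * ‖xs n‖ := f.le_opNorm _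
    _ = ‖xs n‖ := by rw [hf, one_mul]
  have hconv : Tendsto xs atTop (𝓝 x) := hkk xs x hweakg hnorm
  simp only [hface, Metric.infDist_singleton]
  exact tendsto_iff_dist_tendsto_zero.mp hconv
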